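/- For all meLL formulas A and B, the sequent ⊢ (!(!A⊗B) ⊸ (!!A ⊗ ?B))^0 is provable in the mL³ 2-sequent calculus, i.e., the 2-sequent ⊢ (?(?A⊥ ⅋ B⊥))^0, (!!A ⊗ ?B)^0 has a proper derivation, witnessing that mL³ properly extends mELL at the level of provability. -/
import Mathlib


/-!
Formulas of second-order unit-free multiplicative exponential linear logic (meLL),
with the paragraph modality. Propositional variables are natural numbers; `pos X`
is the variable X and `neg X` is its dual X⊥.
-/
inductive Form : Type
  | pos : ℕ → Form
  | neg : ℕ → Form
  | tens : Form → Form → Form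
  | parr : Form → Form → Form
  | oc : Form → Form
  | wn : Form → Form
  | ex : ℕ → Form → Form
  | fa : ℕ → Form → Form
  | parg : Form → Form
  deriving DecidableEq

namespace Form

/-- Linear negation, defined by De Morgan duality. -/
def negF : Form → Form
  | pos X => neg X
  | neg X => pos X
  | tens A B => parr (negF B) (negF A)
  | parr A B => tens (negF B) (negF A)
  | oc A => wn (negF A)
  | wn A => oc (negF A)
  | ex X A => fa X (negF A)
  | fa X A => ex X (negF A)
  | parg A => parg (negF A)

/-- Free propositional variables of a formula. -/
def fv : Form → Finset ℕ
  | pos X => {X}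
  | neg X => {X}
  | tens A B => fv A ∪ fv B
  | parr A B => fv A ∪ fv B
  | oc A => fv A
  | wn A => fv A
  | ex X A => fv A \ {X}
  | fa X A => fv A \ {X}
  | parg A => fv A

/-- Substitution `A[B/X]`: the occurrences of the variable X are replaced by B,
and the occurrences of X⊥ by B⊥. -/
def subst (B : Form) (X : ℕ) : Form → Form
  | pos Y => if Y = X then B else pos Y
  | neg Y => if Y = X then negF B else neg Y
  | tens A₁ A₂ => tens (subst B X A₁) (subst B X A₂)
  | parr A₁ A₂ => parr (subst B X A₁) (subst B X A₂)
  | oc A => oc (subst B X A)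
  | wn A => wn (subst B X A)
  | ex Y A => if Y = X then ex Y A else ex Y (subst B X A)
  | fa Y A => if Y = X then fa Y A else fa Y (subst B X A)
  | parg A => parg (subst B X A)

end Form

/-- An indexed formula: a meLL formula carrying an integer index. -/
abbrev IForm := Form × ℤ

/-- The mL³ 2-sequent calculus.  A 2-sequent is represented as a finite multiset
of indexed formulas.  Daimon and mix are included as in the paper. -/
inductive Deriv3 : Multiset IForm → Prop
  | ax (A : Form) (i : ℤ) : Deriv3 {(A.negF, i), (A, i)}
  | cut (Γ Δ : Multiset IForm) (A : Form) (i : ℤ) :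
      Deriv3 ((A, i) ::ₘ Γ) → Deriv3 ((A.negF, i) ::ₘ Δ) → Deriv3 (Γ + Δ)
  | tens (Γ Δ : Multiset IForm) (A B : Form) (i : ℤ) :
      Deriv3 ((A, i) ::ₘ Γ) → Deriv3 ((B, i) ::ₘ Δ) →
      Deriv3 ((Form.tens A B, i) ::ₘ (Γ + Δ))
  | parr (Γ : Multiset IForm) (A B : Form) (i : ℤ) :
      Deriv3 ((A, i) ::ₘ (B, i) ::ₘ Γ) → Deriv3 ((Form.parr A B, i) ::ₘ Γ)
  | fa (Γ : Multiset IForm) (A : Form) (X : ℕ) (i : ℤ) :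
      Deriv3 ((A, i) ::ₘ Γ) → (∀ p ∈ Γ, X ∉ (Prod.fst p).fv) →
      Deriv3 ((Form.fa X A, i) ::ₘ Γ)
  | ex (Γ : Multiset IForm) (A B : Form) (X : ℕ) (i : ℤ) :
      Deriv3 ((Form.subst B X A, i) ::ₘ Γ) → Deriv3 ((Form.ex X A, i) ::ₘ Γ)
  | prom (Γ : Multiset IForm) (A : Form) (i : ℤ) :
      Deriv3 ((A, i + 1) ::ₘ Γ.map (fun p => (Form.wn p.1, p.2))) →
      Deriv3 ((Form.oc A, i) ::ₘ Γ.map (fun p => (Form.wn p.1, p.2)))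
  | der (Γ : Multiset IForm) (A : Form) (i : ℤ) :
      Deriv3 ((A, i + 1) ::ₘ Γ) → Deriv3 ((Form.wn A, i) ::ₘ Γ)
  | weak (Γ : Multiset IForm) (A : Form) (i : ℤ) :
      Deriv3 Γ → Deriv3 ((Form.wn A, i) ::ₘ Γ)
  | contr (Γ : Multiset IForm) (A : Form) (i : ℤ) :
      Deriv3 ((Form.wn A, i) ::ₘ (Form.wn A, i) ::ₘ Γ) →
      Deriv3 ((Form.wn A, i) ::ₘ Γ)
  | parg (Γ : Multiset IForm) (A : Form) (i : ℤ) :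
      Deriv3 ((A, i + 1) ::ₘ Γ) → Deriv3 ((Form.parg A, i) ::ₘ Γ)
  | daimon : Deriv3 0
  | mix (Γ Δ : Multiset IForm) : Deriv3 Γ → Deriv3 Δ → Deriv3 (Γ + Δ)

/-- Linear implication `A ⊸ B = A⊥ ⅋ B`. -/
def limp (A B : Form) : Form := Form.parr A.negF B
section Aux

private lemma deriv3_cast {Γ Δ : Multiset IForm} (h : Γ = Δ) (d : Deriv3 Γ) : Deriv3 Δ := h ▸ d

/-- Core: ⊢ (!!A ⊗ ?B)^0, (?A⊥)^1, (B⊥)^1 -/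
private lemma tens_core (A B : Form) :
    Deriv3 ((Form.tens (Form.oc (Form.oc A)) (Form.wn B), (0:ℤ)) ::ₘ
      (Form.wn A.negF, (1:ℤ)) ::ₘ (B.negF, (1:ℤ)) ::ₘ 0) := by
  have h1 : Deriv3 ((Form.oc A, (0:ℤ)+1) ::ₘ
      (((A.negF : Form), (1:ℤ)) ::ₘ (0 : Multiset IForm)).map (fun p => (Form.wn p.1, p.2))) := by
    have h := Deriv3.ax (Form.oc A) 1
    simp only [Form.negF] at h
    have e : (Form.wn A.negF, (1:ℤ)) ::ₘ (Form.oc A, (1:ℤ)) ::ₘ (0 : Multiset IForm)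
        = (Form.oc A, (0:ℤ)+1) ::ₘ
          (((A.negF : Form), (1:ℤ)) ::ₘ (0 : Multiset IForm)).map (fun p => (Form.wn p.1, p.2)) := by
      rw [Multiset.cons_swap]; norm_num
    exact deriv3_cast e h
  have h2 := Deriv3.prom (((A.negF : Form), (1:ℤ)) ::ₘ 0) (Form.oc A) 0 h1
  simp only [Multiset.map_cons, Multiset.map_zero] at h2
  -- h2 : Deriv3 ((oc (oc A), 0) ::ₘ (wn A.negF, 1) ::ₘ 0)
  have h3 : Deriv3 ((Form.wn B, (0:ℤ)) ::ₘ (B.negF, (1:ℤ)) ::ₘ (0 : Multiset IForm)) := by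
    have h := Deriv3.ax B 1
    have e : (B.negF, (1:ℤ)) ::ₘ (B, (1:ℤ)) ::ₘ (0 : Multiset IForm)
        = (B, (0:ℤ)+1) ::ₘ (B.negF, (1:ℤ)) ::ₘ (0 : Multiset IForm) := by
      rw [Multiset.cons_swap]; norm_num
    exact Deriv3.der _ B 0 (deriv3_cast e h)
  have h4 := Deriv3.tens ((Form.wn A.negF, (1:ℤ)) ::ₘ 0) ((B.negF, (1:ℤ)) ::ₘ 0)
      (Form.oc (Form.oc A)) (Form.wn B) 0 h2 h3
  have e : (((Form.wn A.negF, (1:ℤ)) ::ₘ 0) + ((B.negF, (1:ℤ)) ::ₘ 0) : Multiset IForm)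
      = (Form.wn A.negF, (1:ℤ)) ::ₘ (B.negF, (1:ℤ)) ::ₘ 0 := by
    simp
  exact deriv3_cast (by rw [e]) h4

end Aux

/-- For all meLL formulas A and B, the sequent ⊢ (!(!A⊗B) ⊸ (!!A ⊗ ?B))^0 is
provable in the mL³ 2-sequent calculus, i.e. the 2-sequent
⊢ (?(?A⊥ ⅋ B⊥))^0, (!!A ⊗ ?B)^0 has a (trivially proper, since all conclusions
carry index 0) derivation. -/
theorem mLLL_extends_mELL_provability (A B : Form) :
    Deriv3 {(Form.wn (Form.parr (Form.wn A.negF) B.negF), 0),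
            (Form.tens (Form.oc (Form.oc A)) (Form.wn B), 0)} ∧
    Deriv3 {(limp (Form.oc (Form.tens (Form.oc A) B))
              (Form.tens (Form.oc (Form.oc A)) (Form.wn B)), 0)} := by
  have key : ∀ C : Form, ∀ _ : Deriv3 ((C, (1:ℤ)) ::ₘ
      (Form.tens (Form.oc (Form.oc A)) (Form.wn B), (0:ℤ)) ::ₘ 0),
      Deriv3 ((Form.wn C, (0:ℤ)) ::ₘ (Form.tens (Form.oc (Form.oc A)) (Form.wn B), (0:ℤ)) ::ₘ 0) := by
    intro C h
    have e : (C, (1:ℤ)) ::ₘ (Form.tens (Form.oc (Form.oc A)) (Form.wn B), (0:ℤ)) ::ₘ (0 : Multiset IForm)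
        = (C, (0:ℤ)+1) ::ₘ (Form.tens (Form.oc (Form.oc A)) (Form.wn B), (0:ℤ)) ::ₘ 0 := by norm_num
    exact Deriv3.der _ C 0 (deriv3_cast e h)
  have hc := tens_core A B
  set T : Form := Form.tens (Form.oc (Form.oc A)) (Form.wn B) with hT
  constructor
  · -- part 1 : ⊢ ?(?A⊥ ⅋ B⊥)^0, T^0
    have e : (T, (0:ℤ)) ::ₘ (Form.wn A.negF, (1:ℤ)) ::ₘ (B.negF, (1:ℤ)) ::ₘ (0 : Multiset IForm)
        = (Form.wn A.negF, (1:ℤ)) ::ₘ (B.negF, (1:ℤ)) ::ₘ (T, (0:ℤ)) ::ₘ 0 := by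
      rw [Multiset.cons_swap (T, (0:ℤ)) (Form.wn A.negF, (1:ℤ))]
      rw [Multiset.cons_swap (T, (0:ℤ)) (B.negF, (1:ℤ))]
    have hp := Deriv3.parr ((T, (0:ℤ)) ::ₘ 0) (Form.wn A.negF) B.negF 1 (deriv3_cast e hc)
    exact key _ hp
  · -- part 2 : ⊢ (?(B⊥ ⅋ ?A⊥) ⅋ T)^0
    have e : (T, (0:ℤ)) ::ₘ (Form.wn A.negF, (1:ℤ)) ::ₘ (B.negF, (1:ℤ)) ::ₘ (0 : Multiset IForm)
        = (B.negF, (1:ℤ)) ::ₘ (Form.wn A.negF, (1:ℤ)) ::ₘ (T, (0:ℤ)) ::ₘ 0 := by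
      rw [Multiset.cons_swap (T, (0:ℤ)) (Form.wn A.negF, (1:ℤ))]
      rw [Multiset.cons_swap (T, (0:ℤ)) (B.negF, (1:ℤ))]
      rw [Multiset.cons_swap (Form.wn A.negF, (1:ℤ)) (B.negF, (1:ℤ))]
    have hp := Deriv3.parr ((T, (0:ℤ)) ::ₘ 0) B.negF (Form.wn A.negF) 1 (deriv3_cast e hc)
    have hd := key _ hp
    have hp2 := Deriv3.parr 0 (Form.wn (Form.parr B.negF (Form.wn A.negF))) T 0 hd
    have hl : limp (Form.oc (Form.tens (Form.oc A) B)) T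
        = Form.parr (Form.wn (Form.parr B.negF (Form.wn A.negF))) T := by
      simp [limp, Form.negF]
    rw [hT] at hl ⊢
    simpa [hl] using hp2
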